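/- Let M be a nonempty connected matroid of rank k on an n-element ground set. Then the rank of the combinatorial derived matroid δM is at most n − k; equivalently, every subset of 𝒞 of cardinality n − k + 1 is dependent in δM. -/

import Mathlib

open Set

namespace DM

variable {α : Type*}

/-- A circuit of a matroid: an inclusion-minimal dependent set. -/
def IsCircuit (M : Matroid α) (C : Set α) : Prop :=
  M.Dep C ∧ ∀ D, M.Dep D → D ⊆ C → D = C

/-- The collection 𝒞 of circuits of `M`. -/
def circuits (M : Matroid α) : Set (Set α) := {C | IsCircuit M C}

/-- The rank of a set: the maximal cardinality of an independent subset. -/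
noncomputable def rk (M : Matroid α) (S : Set α) : ℕ :=
  sSup {m : ℕ | ∃ I, I ⊆ S ∧ M.Indep I ∧ I.ncard = m}

/-- The nullity function n(S) = |S| - r(S). -/
noncomputable def nullity (M : Matroid α) (S : Set α) : ℕ := S.ncard - rk M S

/-- The support of a family of sets. -/
def supp (A : Set (Set α)) : Set α := ⋃₀ A

/-- The initial collection 𝒜₀ = {A ⊆ 𝒞 : |A| > n(supp A)}. -/
noncomputable def A0 (M : Matroid α) : Set (Set (Set α)) :=
  {A | A ⊆ circuits M ∧ nullity M (supp A) < A.ncard}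

/-- The operation ε. -/
def eps (X : Set (Set (Set α))) : Set (Set (Set α)) :=
  X ∪ {B | ∃ A₁ ∈ X, ∃ A₂ ∈ X, A₁ ∩ A₂ ∉ X ∧ ∃ C ∈ A₁ ∩ A₂, B = (A₁ ∪ A₂) \ {C}}

/-- The up-closure ↑X = {A ⊆ 𝒞 : ∃ A' ∈ X, A' ⊆ A} within the ground collection 𝒞. -/
def up (𝒞 : Set (Set α)) (X : Set (Set (Set α))) : Set (Set (Set α)) :=
  {A | A ⊆ 𝒞 ∧ ∃ A' ∈ X, A' ⊆ A}

/-- The increasing sequence 𝒜ᵢ with 𝒜₍ᵢ₊₁₎ = ↑ε(𝒜ᵢ). -/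
noncomputable def Ai (M : Matroid α) : ℕ → Set (Set (Set α))
  | 0 => A0 M
  | (i+1) => up (circuits M) (eps (Ai M i))

/-- 𝒜 = ⋃ᵢ 𝒜ᵢ : the collection of dependent sets of the combinatorial derived matroid δM. -/
noncomputable def derivedDep (M : Matroid α) : Set (Set (Set α)) := ⋃ i, Ai M i


lemma rk_eq_basis_ncard (M : Matroid α) (hE : M.E.Finite) {S I : Set α} (hS : S ⊆ M.E)
    (hI : M.IsBasis I S) : rk M S = I.ncard := by
  have hub : ∀ m ∈ {m : ℕ | ∃ J, J ⊆ S ∧ M.Indep J ∧ J.ncard = m}, m ≤ I.ncard := by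
    rintro m ⟨J, hJS, hJind, rfl⟩
    obtain ⟨J', hJ', hJJ'⟩ := hJind.subset_isBasis_of_subset hJS hS
    have h1 : J'.encard = I.encard := hJ'.encard_eq_encard hI
    have hJ'fin : J'.Finite := hE.subset hJ'.indep.subset_ground
    have h2 : J'.ncard = I.ncard := by rw [Set.ncard_def, Set.ncard_def, h1]
    exact le_trans (Set.ncard_le_ncard hJJ' hJ'fin) h2.le
  exact le_antisymm (csSup_le ⟨I.ncard, I, hI.subset, hI.indep, rfl⟩ hub)
    (le_csSup ⟨I.ncard, hub⟩ ⟨I, hI.subset, hI.indep, rfl⟩)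

/-- for a nonempty connected matroid of rank k on n elements, the rank of
δM is at most n − k: every subset of 𝒞 of cardinality at least n − k + 1 is dependent. -/
theorem derived_rank_le (M : Matroid α) (hE : M.E.Finite) (hne : M.E.Nonempty)
    (hconn : ∀ x ∈ M.E, ∀ y ∈ M.E, x ≠ y → ∃ C, IsCircuit M C ∧ x ∈ C ∧ y ∈ C)
    (n k : ℕ) (hn : M.E.ncard = n) (hk : rk M M.E = k)
    (A : Set (Set α)) (hA : A ⊆ circuits M) (hcard : n - k + 1 ≤ A.ncard) :
    A ∈ derivedDep M := by
  set S : Set α := supp A with hSdef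
  have hS : S ⊆ M.E := by
    apply Set.sUnion_subset
    intro C hC
    exact ((hA hC).1).subset_ground
  obtain ⟨I, hI⟩ := M.exists_isBasis S hS
  obtain ⟨B, hB, hIB⟩ := hI.indep.subset_isBasis_of_subset (hI.subset.trans hS) Subset.rfl
  have hIfin : I.Finite := hE.subset hI.indep.subset_ground
  have hBfin : B.Finite := hE.subset hB.indep.subset_ground
  have hSfin : S.Finite := hE.subset hS
  -- B \ I ⊆ M.E \ S
  have hdiff : B \ I ⊆ M.E \ S := by
    rintro b ⟨hbB, hbI⟩
    refine ⟨hB.indep.subset_ground hbB, fun hbS => hbI ?_⟩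
    have hins : M.Indep (insert b I) := hB.indep.subset (insert_subset hbB hIB)
    have := hI.eq_of_subset_indep hins (subset_insert _ _) (insert_subset hbS hI.subset)
    rw [this]; exact mem_insert _ _
  have hrkS : rk M S = I.ncard := rk_eq_basis_ncard M hE hS hI
  have hrkE : rk M M.E = B.ncard := rk_eq_basis_ncard M hE Subset.rfl hB
  have hBsplit : (B \ I).ncard + I.ncard = B.ncard :=
    Set.ncard_diff_add_ncard_of_subset hIB hBfin
  have hEsplit : (M.E \ S).ncard + S.ncard = M.E.ncard :=
    Set.ncard_diff_add_ncard_of_subset hS hE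
  have hle : (B \ I).ncard ≤ (M.E \ S).ncard :=
    Set.ncard_le_ncard hdiff (hE.subset (Set.diff_subset))
  have hIS : I.ncard ≤ S.ncard := Set.ncard_le_ncard hI.subset hSfin
  have hnull : nullity M S < A.ncard := by
    have : nullity M S = S.ncard - I.ncard := by rw [nullity, hrkS]
    omega
  have hA0 : A ∈ A0 M := ⟨hA, hnull⟩
  exact Set.mem_iUnion.2 ⟨0, hA0⟩

end DM
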